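/- arXiv:2601.04685 — 6 statements merged into one kernel-verified Lean document; each statement's English description precedes it below -/
import Mathlib

section
/- Let H_1, …, H_m be bounded self-adjoint operators on a complex Hilbert space with M := max_j ‖H_j‖, let a_1, …, a_m be complex coefficients with ∑_j a_j = 1, set A := ∑_j |a_j| and H̄ := ∑_j a_j H_j. Then for every Δt ≥ 0, ‖∑_j a_j exp(−i Δt H_j) − exp(−i Δt H̄)‖ ≤ (Δt²/2)·‖∑_j a_j H_j² − H̄²‖ + (Δt³ M³/6)·A·e^{Δt M} + (Δt³ A³ M³/6)·e^{A Δt M}. -/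
open NormedSpace Finset Nat

lemma exp_remainder_bound {𝔸 : Type*} [NormedRing 𝔸] [NormedAlgebra ℂ 𝔸] [CompleteSpace 𝔸]
    (x : 𝔸) :
    ‖exp x - (1 + x + (2 : ℂ)⁻¹ • (x * x))‖ ≤ ‖x‖ ^ 3 * Real.exp ‖x‖ / 6 := by
  have hsum : Summable fun n : ℕ => ((n ! : ℂ))⁻¹ • x ^ n := expSeries_summable' (𝕂 := ℂ) x
  have hsplit := Summable.sum_add_tsum_nat_add 3 hsum
  have hpart : ∑ i ∈ range 3, ((i ! : ℂ))⁻¹ • x ^ i = 1 + x + (2 : ℂ)⁻¹ • (x * x) := by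
    simp [Finset.sum_range_succ, pow_succ, Nat.factorial]
  have hexp : exp x = ∑' n : ℕ, ((n ! : ℂ))⁻¹ • x ^ n := by
    rw [exp_eq_tsum ℂ]
  have key : exp x - (1 + x + (2 : ℂ)⁻¹ • (x * x)) =
      ∑' n : ℕ, (((n + 3)! : ℂ))⁻¹ • x ^ (n + 3) := by
    rw [hexp, ← hpart, ← hsplit]; abel
  rw [key]
  have hg : ∀ n : ℕ, ‖(((n + 3)! : ℂ))⁻¹ • x ^ (n + 3)‖ ≤
      ‖x‖ ^ 3 / 6 * (‖x‖ ^ n / n !) := by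
    intro n
    rw [norm_smul]
    have h1 : ‖(((n + 3)! : ℂ))⁻¹‖ = ((n + 3)! : ℝ)⁻¹ := by
      rw [norm_inv, Complex.norm_natCast]
    rw [h1]
    have h2 : ‖x ^ (n + 3)‖ ≤ ‖x‖ ^ (n + 3) := norm_pow_le' x (by omega)
    have h3 : (6 * n ! : ℝ) ≤ ((n + 3)! : ℝ) := by
      have : 6 * n ! ≤ (n + 3)! := by
        have := Nat.factorial_mul_factorial_dvd_factorial_add 3 n
        calc 6 * n ! = 3! * n ! := by norm_num [Nat.factorial]
        _ ≤ (3 + n)! := Nat.mul_le_mul_left _ (Nat.le_refl _) |>.trans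
            (Nat.le_of_dvd (Nat.factorial_pos _) this)
        _ = (n + 3)! := by rw [Nat.add_comm]
      exact_mod_cast this
    have hnf : (0:ℝ) < (n ! : ℝ) := by positivity
    calc ((n + 3)! : ℝ)⁻¹ * ‖x ^ (n + 3)‖ ≤ ((n + 3)! : ℝ)⁻¹ * ‖x‖ ^ (n + 3) := by
          gcongr
      _ ≤ (6 * (n ! : ℝ))⁻¹ * ‖x‖ ^ (n + 3) := by gcongr
      _ = ‖x‖ ^ 3 / 6 * (‖x‖ ^ n / n !) := by rw [pow_add]; field_simp
  have hgsum : Summable fun n : ℕ => ‖x‖ ^ 3 / 6 * (‖x‖ ^ n / n !) :=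
    (Real.summable_pow_div_factorial ‖x‖).mul_left _
  have hnsum : Summable fun n : ℕ => ‖(((n + 3)! : ℂ))⁻¹ • x ^ (n + 3)‖ :=
    Summable.of_nonneg_of_le (fun n => norm_nonneg _) hg hgsum
  calc ‖∑' n : ℕ, (((n + 3)! : ℂ))⁻¹ • x ^ (n + 3)‖
      ≤ ∑' n : ℕ, ‖(((n + 3)! : ℂ))⁻¹ • x ^ (n + 3)‖ := norm_tsum_le_tsum_norm hnsum
    _ ≤ ∑' n : ℕ, ‖x‖ ^ 3 / 6 * (‖x‖ ^ n / n !) := Summable.tsum_le_tsum hg hnsum hgsum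
    _ = ‖x‖ ^ 3 / 6 * ∑' n : ℕ, ‖x‖ ^ n / n ! := tsum_mul_left
    _ = ‖x‖ ^ 3 * Real.exp ‖x‖ / 6 := by
        rw [Real.exp_eq_exp_ℝ, exp_eq_tsum_div]; ring


/-- **Proposition 1, explicit remainder.** For bounded self-adjoint
operators `H₁, …, H_m` with `M = max_j ‖H_j‖`, complex coefficients with `∑ a_j = 1`,
`A = ∑ |a_j|` and `H̄ = ∑ a_j H_j`, for every `Δt ≥ 0`:
`‖∑ a_j exp(−iΔtH_j) − exp(−iΔtH̄)‖ ≤ (Δt²/2)‖∑ a_j H_j² − H̄²‖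
  + (Δt³M³/6)·A·e^{ΔtM} + (Δt³A³M³/6)·e^{AΔtM}`. -/
theorem short_time_equivalence_error_bound {𝓗 : Type*} [NormedAddCommGroup 𝓗]
    [InnerProductSpace ℂ 𝓗] [CompleteSpace 𝓗]
    {m : ℕ} (H : Fin m → 𝓗 →L[ℂ] 𝓗) (hH : ∀ j, IsSelfAdjoint (H j))
    (a : Fin m → ℂ) (ha : ∑ j, a j = 1)
    (M : ℝ) (hM : M = ⨆ j, ‖H j‖)
    (A : ℝ) (hA : A = ∑ j, ‖a j‖)
    (Hbar : 𝓗 →L[ℂ] 𝓗) (hHbar : Hbar = ∑ j, a j • H j) :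
    ∀ Δt : ℝ, 0 ≤ Δt →
      ‖(∑ j, a j • exp ((-(Complex.I * (Δt : ℂ))) • H j)) -
          exp ((-(Complex.I * (Δt : ℂ))) • Hbar)‖ ≤
        Δt ^ 2 / 2 * ‖(∑ j, a j • (H j * H j)) - Hbar * Hbar‖ +
          Δt ^ 3 * M ^ 3 / 6 * A * Real.exp (Δt * M) +
          Δt ^ 3 * A ^ 3 * M ^ 3 / 6 * Real.exp (A * Δt * M) := by
  intro Δt hΔt
  set c : ℂ := -(Complex.I * (Δt : ℂ)) with hc
  have hcnorm : ‖c‖ = Δt := by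
    simp [hc, Complex.norm_real, abs_of_nonneg hΔt]
  have hbdd : BddAbove (Set.range fun j => ‖H j‖) := Set.Finite.bddAbove (Set.finite_range _)
  have hHle : ∀ j, ‖H j‖ ≤ M := fun j => hM ▸ le_ciSup hbdd j
  have hm : m ≠ 0 := by rintro rfl; simp at ha
  have hM0 : 0 ≤ M := by
    have j : Fin m := ⟨0, Nat.pos_of_ne_zero hm⟩
    exact (norm_nonneg (H j)).trans (hHle j)
  have hA0 : 0 ≤ A := by
    rw [hA]; exact Finset.sum_nonneg fun j _ => norm_nonneg _
  have hHbarle : ‖Hbar‖ ≤ A * M := by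
    rw [hHbar, hA]
    calc ‖∑ j, a j • H j‖ ≤ ∑ j, ‖a j • H j‖ := norm_sum_le _ _
      _ ≤ ∑ j, ‖a j‖ * M := by
          refine Finset.sum_le_sum fun j _ => ?_
          rw [norm_smul]
          exact mul_le_mul_of_nonneg_left (hHle j) (norm_nonneg _)
      _ = (∑ j, ‖a j‖) * M := by rw [Finset.sum_mul]
  set P : (𝓗 →L[ℂ] 𝓗) → (𝓗 →L[ℂ] 𝓗) := fun T => 1 + T + (2 : ℂ)⁻¹ • (T * T) with hP
  have h1 : ∑ j, a j • (1 : 𝓗 →L[ℂ] 𝓗) = 1 := by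
    rw [← Finset.sum_smul, ha, one_smul]
  have h2 : ∑ j, a j • (c • H j) = c • Hbar := by
    rw [hHbar, Finset.smul_sum]
    exact Finset.sum_congr rfl fun j _ => smul_comm _ _ _
  have h3 : ∑ j, a j • ((2 : ℂ)⁻¹ • ((c • H j) * (c • H j))) =
      ((2 : ℂ)⁻¹ * c ^ 2) • ∑ j, a j • (H j * H j) := by
    rw [Finset.smul_sum]
    refine Finset.sum_congr rfl fun j _ => ?_
    rw [smul_mul_smul_comm, smul_smul, smul_smul, smul_smul]
    congr 1
    ring
  have hpoly : (∑ j, a j • P (c • H j)) - P (c • Hbar) =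
      ((2 : ℂ)⁻¹ * c ^ 2) • ((∑ j, a j • (H j * H j)) - Hbar * Hbar) := by
    have hL : ∑ j, a j • P (c • H j) =
        1 + c • Hbar + ((2 : ℂ)⁻¹ * c ^ 2) • ∑ j, a j • (H j * H j) := by
      simp only [hP, smul_add, Finset.sum_add_distrib]
      rw [h1, h2, h3]
    have hR : P (c • Hbar) = 1 + c • Hbar + ((2 : ℂ)⁻¹ * c ^ 2) • (Hbar * Hbar) := by
      simp only [hP]
      rw [smul_mul_smul_comm, smul_smul, ← pow_two]
    rw [hL, hR, smul_sub]
    abel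
  have hsplit : (∑ j, a j • exp (c • H j)) - exp (c • Hbar) =
      (((2 : ℂ)⁻¹ * c ^ 2) • ((∑ j, a j • (H j * H j)) - Hbar * Hbar)) +
        ((∑ j, a j • (exp (c • H j) - P (c • H j))) -
          (exp (c • Hbar) - P (c • Hbar))) := by
    rw [← hpoly]
    simp only [smul_sub, Finset.sum_sub_distrib]
    abel
  rw [hsplit]
  have e1 : ‖((2 : ℂ)⁻¹ * c ^ 2) • ((∑ j, a j • (H j * H j)) - Hbar * Hbar)‖ =
      Δt ^ 2 / 2 * ‖(∑ j, a j • (H j * H j)) - Hbar * Hbar‖ := by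
    rw [norm_smul, norm_mul, norm_pow, hcnorm]
    have : ‖(2 : ℂ)⁻¹‖ = 2⁻¹ := by norm_num
    rw [this]; ring
  have bnd : ∀ (T : 𝓗 →L[ℂ] 𝓗) (B : ℝ), 0 ≤ B → ‖T‖ ≤ B →
      ‖exp (c • T) - P (c • T)‖ ≤ (Δt * B) ^ 3 * Real.exp (Δt * B) / 6 := by
    intro T B hB hTB
    have hn : ‖c • T‖ ≤ Δt * B := by
      rw [norm_smul, hcnorm]
      exact mul_le_mul_of_nonneg_left hTB hΔt
    have hn0 : (0:ℝ) ≤ ‖c • T‖ := norm_nonneg _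
    refine (exp_remainder_bound (c • T)).trans ?_
    gcongr
  have e2 : ‖∑ j, a j • (exp (c • H j) - P (c • H j))‖ ≤
      Δt ^ 3 * M ^ 3 / 6 * A * Real.exp (Δt * M) := by
    calc ‖∑ j, a j • (exp (c • H j) - P (c • H j))‖
        ≤ ∑ j, ‖a j • (exp (c • H j) - P (c • H j))‖ := norm_sum_le _ _
      _ ≤ ∑ j, ‖a j‖ * ((Δt * M) ^ 3 * Real.exp (Δt * M) / 6) := by
          refine Finset.sum_le_sum fun j _ => ?_
          rw [norm_smul]
          exact mul_le_mul_of_nonneg_left (bnd (H j) M hM0 (hHle j)) (norm_nonneg _)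
      _ = A * ((Δt * M) ^ 3 * Real.exp (Δt * M) / 6) := by
          rw [← Finset.sum_mul, ← hA]
      _ = Δt ^ 3 * M ^ 3 / 6 * A * Real.exp (Δt * M) := by ring
  have e3 : ‖exp (c • Hbar) - P (c • Hbar)‖ ≤
      Δt ^ 3 * A ^ 3 * M ^ 3 / 6 * Real.exp (A * Δt * M) := by
    have h := bnd Hbar (A * M) (mul_nonneg hA0 hM0) hHbarle
    have : (Δt * (A * M)) ^ 3 * Real.exp (Δt * (A * M)) / 6 =
        Δt ^ 3 * A ^ 3 * M ^ 3 / 6 * Real.exp (A * Δt * M) := by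
      rw [show Δt * (A * M) = A * Δt * M by ring]; ring
    rwa [this] at h
  refine le_trans (norm_add_le _ _) ?_
  rw [e1]
  have t2 := norm_sub_le (∑ j, a j • (exp (c • H j) - P (c • H j)))
    (exp (c • Hbar) - P (c • Hbar))
  linarith
end

section
/- Let H be a bounded self-adjoint operator on a complex Hilbert space, and let σ > 0 and Δt ∈ ℝ. Then the Bochner integral of the operator-valued Gaussian superposition of time translations equals the regulated step: ∫_ℝ (2πσ²)^{−1/2} · exp(−(u − 1)²/(2σ²)) · exp(−i u Δt H) du = exp(−i Δt H) · exp(−(σ² Δt²/2) H²), where the integral is taken in the Banach space of bounded operators. -/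
open MeasureTheory NormedSpace Real

noncomputable section GaussAux

namespace GaussAux

lemma norm_exp_le {𝔸 : Type*} [NormedRing 𝔸] [NormedAlgebra ℂ 𝔸] [CompleteSpace 𝔸]
    [NormOneClass 𝔸] (x : 𝔸) : ‖NormedSpace.exp x‖ ≤ Real.exp ‖x‖ := by
  rw [exp_eq_tsum ℂ]
  refine (norm_tsum_le_tsum_norm (norm_expSeries_summable' x)).trans ?_
  rw [Real.exp_eq_exp_ℝ, exp_eq_tsum_div]
  refine Summable.tsum_le_tsum (fun n => ?_) (norm_expSeries_summable' x)
    (Real.summable_pow_div_factorial ‖x‖)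
  rw [norm_smul, norm_inv, Complex.norm_natCast]
  rcases Nat.eq_zero_or_pos n with h | h
  · subst h; simp
  · rw [div_eq_inv_mul]
    gcongr
    exact norm_pow_le' x h

lemma integrable_rexp_quadratic {b : ℝ} (hb : b < 0) (c d : ℝ) :
    Integrable fun u : ℝ => Real.exp (b * u ^ 2 + c * u + d) := by
  have h : ((b : ℂ)).re < 0 := by simpa using hb
  refine (integrable_cexp_quadratic' h (c : ℂ) (d : ℂ)).norm.congr
    (Filter.Eventually.of_forall fun u => ?_)
  have h2 : ((b : ℂ) * u ^ 2 + c * u + d) = ((b * u ^ 2 + c * u + d : ℝ) : ℂ) := by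
    push_cast; ring
  simp only [h2, ← Complex.ofReal_exp, Complex.norm_real, Real.norm_eq_abs,
    abs_of_pos (Real.exp_pos _)]

lemma scalar_gaussian (σ : ℝ) (hσ : 0 < σ) (z : ℂ) :
    ∫ u : ℝ, (((2 * π * σ ^ 2) ^ (-(1 : ℝ) / 2) * Real.exp (-(u - 1) ^ 2 / (2 * σ ^ 2)) : ℝ) : ℂ) *
        Complex.exp ((u : ℂ) * z) =
      Complex.exp z * Complex.exp ((σ : ℂ) ^ 2 / 2 * z ^ 2) := by
  have hσ0 : σ ≠ 0 := hσ.ne'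
  have hσC : (σ : ℂ) ≠ 0 := by exact_mod_cast hσ0
  have h2πσ : (0 : ℝ) < 2 * π * σ ^ 2 := by positivity
  set b : ℂ := ((-(1 / (2 * σ ^ 2)) : ℝ) : ℂ) with hbdef
  have hbre : b.re < 0 := by
    rw [hbdef, Complex.ofReal_re]
    have : (0:ℝ) < 1 / (2 * σ ^ 2) := by positivity
    linarith
  have key : ∀ u : ℝ,
      (((2 * π * σ ^ 2) ^ (-(1 : ℝ) / 2) * Real.exp (-(u - 1) ^ 2 / (2 * σ ^ 2)) : ℝ) : ℂ) *
        Complex.exp ((u : ℂ) * z)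
      = (((2 * π * σ ^ 2) ^ (-(1 : ℝ) / 2) : ℝ) : ℂ) *
        Complex.exp (b * (u : ℂ) ^ 2 + (((1 / σ ^ 2 : ℝ) : ℂ) + z) * (u : ℂ) + b) := by
    intro u
    rw [Complex.ofReal_mul, mul_assoc]
    congr 1
    rw [Complex.ofReal_exp, ← Complex.exp_add]
    congr 1
    rw [hbdef]
    push_cast
    field_simp [hσC]
    ring
  simp only [key]
  rw [integral_const_mul, integral_cexp_quadratic hbre]
  have hπb : (π : ℂ) / -b = ((2 * π * σ ^ 2 : ℝ) : ℂ) := by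
    rw [hbdef]
    push_cast
    field_simp [hσC]
  have hpow : (((2 * π * σ ^ 2 : ℝ) : ℂ)) ^ (1 / 2 : ℂ)
      = (((2 * π * σ ^ 2) ^ (1 / 2 : ℝ) : ℝ) : ℂ) := by
    rw [Complex.ofReal_cpow h2πσ.le]
    norm_num
  rw [hπb, hpow, ← mul_assoc, ← Complex.ofReal_mul, ← Real.rpow_add h2πσ]
  have he : (-(1:ℝ)/2 + 1/2) = 0 := by norm_num
  rw [he, Real.rpow_zero, Complex.ofReal_one, one_mul, ← Complex.exp_add]
  congr 1
  rw [hbdef]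
  push_cast
  field_simp [hσC]
  ring

lemma integrable_gauss_exp {𝔸 : Type*} [NormedRing 𝔸] [NormedAlgebra ℂ 𝔸] [CompleteSpace 𝔸]
    [NormOneClass 𝔸] (σ : ℝ) (hσ : 0 < σ) (a : 𝔸) :
    Integrable fun u : ℝ =>
      (((2 * π * σ ^ 2) ^ (-(1 : ℝ) / 2) * Real.exp (-(u - 1) ^ 2 / (2 * σ ^ 2)) : ℝ) : ℂ) •
        NormedSpace.exp ((u : ℂ) • a) := by
  have hσ0 : σ ≠ 0 := hσ.ne'
  have hb : (-(1 / (2 * σ ^ 2)) : ℝ) < 0 := by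
    have : (0:ℝ) < 1 / (2 * σ ^ 2) := by positivity
    linarith
  have key : ∀ t : ℝ, Integrable (fun u : ℝ =>
      (2 * π * σ ^ 2) ^ (-(1 : ℝ) / 2) *
        (Real.exp (-(u - 1) ^ 2 / (2 * σ ^ 2)) * Real.exp (t * u))) := by
    intro t
    refine ((integrable_rexp_quadratic hb (1 / σ ^ 2 + t) (-(1 / (2 * σ ^ 2)))).const_mul
      ((2 * π * σ ^ 2) ^ (-(1 : ℝ) / 2))).congr (Filter.Eventually.of_forall fun u => ?_)
    dsimp only
    congr 1
    rw [← Real.exp_add]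
    congr 1
    field_simp
    ring
  have hcont : Continuous fun u : ℝ =>
      (((2 * π * σ ^ 2) ^ (-(1 : ℝ) / 2) * Real.exp (-(u - 1) ^ 2 / (2 * σ ^ 2)) : ℝ) : ℂ) •
        NormedSpace.exp ((u : ℂ) • a) := by
    letI : NormedAlgebra ℚ 𝔸 := .restrictScalars ℚ ℂ 𝔸
    refine Continuous.smul ?_
      (exp_continuous.comp (Complex.continuous_ofReal.smul continuous_const))
    exact Complex.continuous_ofReal.comp (by fun_prop)
  refine ((key ‖a‖).add (key (-‖a‖))).mono' hcont.aestronglyMeasurable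
    (Filter.Eventually.of_forall fun u => ?_)
  have h1 : ‖(((2 * π * σ ^ 2) ^ (-(1 : ℝ) / 2) * Real.exp (-(u - 1) ^ 2 / (2 * σ ^ 2)) : ℝ) : ℂ)‖
      = (2 * π * σ ^ 2) ^ (-(1 : ℝ) / 2) * Real.exp (-(u - 1) ^ 2 / (2 * σ ^ 2)) := by
    rw [Complex.norm_real, Real.norm_eq_abs, abs_of_pos (by positivity)]
  rw [norm_smul, h1, Pi.add_apply]
  have h2 : ‖NormedSpace.exp ((u : ℂ) • a)‖ ≤ Real.exp (|u| * ‖a‖) := by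
    refine (norm_exp_le _).trans ?_
    rw [norm_smul, Complex.norm_real, Real.norm_eq_abs]
  have h3 : Real.exp (|u| * ‖a‖) ≤ Real.exp (‖a‖ * u) + Real.exp (-‖a‖ * u) := by
    rcases abs_choice u with h | h
    · rw [h, mul_comm]
      exact le_add_of_nonneg_right (Real.exp_pos _).le
    · rw [h, mul_comm, mul_neg, ← neg_mul]
      exact le_add_of_nonneg_left (Real.exp_pos _).le
  calc (2 * π * σ ^ 2) ^ (-(1 : ℝ) / 2) * Real.exp (-(u - 1) ^ 2 / (2 * σ ^ 2)) *
        ‖NormedSpace.exp ((u : ℂ) • a)‖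
      ≤ (2 * π * σ ^ 2) ^ (-(1 : ℝ) / 2) * Real.exp (-(u - 1) ^ 2 / (2 * σ ^ 2)) *
        (Real.exp (‖a‖ * u) + Real.exp (-‖a‖ * u)) :=
        mul_le_mul_of_nonneg_left (h2.trans h3) (by positivity)
    _ = _ := by ring

end GaussAux

end GaussAux

open GaussAux

set_option maxHeartbeats 1000000 in
set_option synthInstance.maxHeartbeats 400000 in
/-- Gaussian superposition of time translations: for a bounded
self-adjoint `H`, `σ > 0` and `Δt ∈ ℝ`, the Bochner integral (in the Banach space of
bounded operators) satisfies
`∫ g_σ(u) exp(−iuΔtH) du = exp(−iΔtH) · exp(−(σ²Δt²/2) H²)`,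
with `g_σ(u) = (2πσ²)^{−1/2} e^{−(u−1)²/(2σ²)}`. -/
theorem gaussian_superposition_of_time_translations {𝓗 : Type*} [NormedAddCommGroup 𝓗]
    [InnerProductSpace ℂ 𝓗] [CompleteSpace 𝓗]
    (H : 𝓗 →L[ℂ] 𝓗) (hH : IsSelfAdjoint H) (σ Δt : ℝ) (hσ : 0 < σ) :
    ∫ u : ℝ,
        ((2 * π * σ ^ 2) ^ (-(1 : ℝ) / 2) * Real.exp (-(u - 1) ^ 2 / (2 * σ ^ 2))) •
          NormedSpace.exp ((-(Complex.I * (u : ℂ) * (Δt : ℂ))) • H) =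
      NormedSpace.exp ((-(Complex.I * (Δt : ℂ))) • H) *
        NormedSpace.exp (((-(σ ^ 2 * Δt ^ 2 / 2) : ℝ) : ℂ) • (H * H)) := by
  rcases subsingleton_or_nontrivial 𝓗 with h𝓗 | h𝓗
  · exact ContinuousLinearMap.ext fun x => Subsingleton.elim _ _
  set A : 𝓗 →L[ℂ] 𝓗 := (-(Complex.I * (Δt : ℂ))) • H with hA
  have hstar : star A = -A := by
    rw [hA, star_smul, hH.star_eq, ← neg_smul]
    congr 1
    simp [Complex.ext_iff]
  haveI hnormal : IsStarNormal A := ⟨by rw [hstar]; exact (Commute.refl A).neg_left⟩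
  -- rewrite coefficients and exponents in terms of A
  have e1 : ∀ u : ℝ, (-(Complex.I * (u : ℂ) * (Δt : ℂ))) • H = (u : ℂ) • A := fun u => by
    rw [hA, smul_smul]; congr 1; ring
  have e3 : (((-(σ ^ 2 * Δt ^ 2 / 2) : ℝ)) : ℂ) • (H * H) = ((σ : ℂ) ^ 2 / 2) • (A * A) := by
    rw [hA, smul_mul_smul_comm, smul_smul]
    congr 1
    have : -(Complex.I * (Δt:ℂ)) * -(Complex.I * (Δt:ℂ)) = Complex.I ^ 2 * (Δt:ℂ) ^ 2 := by ring
    rw [this, Complex.I_sq]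
    push_cast
    ring
  have ecoe : ∀ (r : ℝ) (x : 𝓗 →L[ℂ] 𝓗), r • x = ((r : ℂ)) • x := fun r x => by
    rw [← smul_one_smul ℂ r x]
    norm_num
  simp only [e1, e3, ecoe]
  -- move to the elemental C*-algebra generated by A
  set S := StarAlgebra.elemental ℂ A with hS
  set a : S := ⟨A, StarAlgebra.elemental.self_mem ℂ A⟩ with ha
  haveI : Nontrivial S := ⟨1, 0, fun h => by
    have : ((1 : S) : 𝓗 →L[ℂ] 𝓗) = ((0 : S) : 𝓗 →L[ℂ] 𝓗) := by rw [h]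
    simp only [OneMemClass.coe_one, ZeroMemClass.coe_zero] at this
    exact one_ne_zero this⟩
  have hint : Integrable (fun u : ℝ =>
      (((2 * π * σ ^ 2) ^ (-(1 : ℝ) / 2) * Real.exp (-(u - 1) ^ 2 / (2 * σ ^ 2)) : ℝ) : ℂ) •
        NormedSpace.exp ((u : ℂ) • a)) := integrable_gauss_exp σ hσ a
  let ι : S →⋆ₐ[ℂ] (𝓗 →L[ℂ] 𝓗) := StarSubalgebra.subtype _
  have hι : Continuous ι := continuous_subtype_val
  let ιL : S →L[ℂ] (𝓗 →L[ℂ] 𝓗) :=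
    { toLinearMap := ι.toAlgHom.toLinearMap, cont := hι }
  have hιa : ι a = A := rfl
  letI : NormedAlgebra ℚ S := .restrictScalars ℚ ℂ S
  letI : NormedAlgebra ℚ (𝓗 →L[ℂ] 𝓗) := .restrictScalars ℚ ℂ (𝓗 →L[ℂ] 𝓗)
  have hexp : ∀ u : ℝ, NormedSpace.exp ((u : ℂ) • A) = ιL (NormedSpace.exp ((u : ℂ) • a)) := fun u => by
    have h := map_exp ι hι ((u : ℂ) • a)
    have h2 : ι ((u : ℂ) • a) = (u : ℂ) • A := by rw [_root_.map_smul, hιa]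
    rw [h2] at h
    exact h.symm
  have hR : NormedSpace.exp A * NormedSpace.exp (((σ : ℂ) ^ 2 / 2) • (A * A)) =
      ιL (NormedSpace.exp a * NormedSpace.exp (((σ : ℂ) ^ 2 / 2) • (a * a))) := by
    have h1 := map_exp ι hι a
    have h2 := map_exp ι hι (((σ : ℂ) ^ 2 / 2) • (a * a))
    have h3 : ι (((σ : ℂ) ^ 2 / 2) • (a * a)) = ((σ : ℂ) ^ 2 / 2) • (A * A) := by
      rw [_root_.map_smul, map_mul, hιa]
    rw [h3] at h2
    have hιL : ∀ x : S, ιL x = ι x := fun _ => rfl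
    rw [hιL, map_mul, h1, h2, hιa]
  suffices hmain : (∫ u : ℝ,
      (((2 * π * σ ^ 2) ^ (-(1 : ℝ) / 2) * Real.exp (-(u - 1) ^ 2 / (2 * σ ^ 2)) : ℝ) : ℂ) •
        NormedSpace.exp ((u : ℂ) • a)) = NormedSpace.exp a * NormedSpace.exp (((σ : ℂ) ^ 2 / 2) • (a * a)) by
    calc ∫ u : ℝ,
        (((2 * π * σ ^ 2) ^ (-(1 : ℝ) / 2) * Real.exp (-(u - 1) ^ 2 / (2 * σ ^ 2)) : ℝ) : ℂ) •
          NormedSpace.exp ((u : ℂ) • A)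
        = ∫ u : ℝ, ιL ((((2 * π * σ ^ 2) ^ (-(1 : ℝ) / 2) *
            Real.exp (-(u - 1) ^ 2 / (2 * σ ^ 2)) : ℝ) : ℂ) • NormedSpace.exp ((u : ℂ) • a)) := by
          congr 1
          funext u
          rw [hexp u]
          exact (ιL.map_smul _ _).symm
      _ = ιL (∫ u : ℝ,
            (((2 * π * σ ^ 2) ^ (-(1 : ℝ) / 2) *
              Real.exp (-(u - 1) ^ 2 / (2 * σ ^ 2)) : ℝ) : ℂ) • NormedSpace.exp ((u : ℂ) • a)) :=
          ContinuousLinearMap.integral_comp_comm ιL hint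
      _ = NormedSpace.exp A * NormedSpace.exp (((σ : ℂ) ^ 2 / 2) • (A * A)) := by rw [hmain, ← hR]
  -- prove the identity inside S using characters
  refine (gelfandTransform_isometry S).injective ?_
  refine ContinuousMap.ext fun φ => ?_
  show φ _ = φ _
  let ψ : S →L[ℂ] ℂ :=
    { toFun := φ, map_add' := fun x y => map_add φ x y,
      map_smul' := fun c x => map_smul φ c x, cont := map_continuous φ }
  have hψ : ∀ x : S, ψ x = φ x := fun _ => rfl
  set z : ℂ := φ a with hz
  calc φ (∫ u : ℝ,
      (((2 * π * σ ^ 2) ^ (-(1 : ℝ) / 2) * Real.exp (-(u - 1) ^ 2 / (2 * σ ^ 2)) : ℝ) : ℂ) •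
        NormedSpace.exp ((u : ℂ) • a))
      = ∫ u : ℝ, φ ((((2 * π * σ ^ 2) ^ (-(1 : ℝ) / 2) *
          Real.exp (-(u - 1) ^ 2 / (2 * σ ^ 2)) : ℝ) : ℂ) • NormedSpace.exp ((u : ℂ) • a)) :=
        (ContinuousLinearMap.integral_comp_comm ψ hint).symm
    _ = ∫ u : ℝ, (((2 * π * σ ^ 2) ^ (-(1 : ℝ) / 2) *
          Real.exp (-(u - 1) ^ 2 / (2 * σ ^ 2)) : ℝ) : ℂ) * Complex.exp ((u : ℂ) * z) := by
        congr 1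
        funext u
        rw [_root_.map_smul φ, smul_eq_mul, map_exp φ (map_continuous φ), _root_.map_smul φ, smul_eq_mul,
          ← Complex.exp_eq_exp_ℂ]
    _ = Complex.exp z * Complex.exp ((σ : ℂ) ^ 2 / 2 * z ^ 2) := scalar_gaussian σ hσ z
    _ = φ (NormedSpace.exp a * NormedSpace.exp (((σ : ℂ) ^ 2 / 2) • (a * a))) := by
        rw [map_mul, map_exp φ (map_continuous φ), map_exp φ (map_continuous φ),
          _root_.map_smul φ, smul_eq_mul, map_mul, ← Complex.exp_eq_exp_ℂ, ← hz]
        congr 1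
        ring
end

section
/- Let H be a bounded self-adjoint operator on a complex Hilbert space, σ, Δt ∈ ℝ, and define V := exp(−i Δt H) · exp(−(σ² Δt²/2) H²). Then for every natural number N and every vector ψ, the N-step success probability satisfies ‖V^N ψ‖² = ⟨ψ, exp(−N σ² Δt² H²) ψ⟩. -/
open NormedSpace

/-- For the regulated step `V = exp(−i Δt H) · exp(−(σ² Δt²/2) H²)`,
the `N`-step success probability satisfies `‖V^N ψ‖² = ⟨ψ, exp(−N σ² Δt² H²) ψ⟩`. -/
theorem regulated_step_pow_success_probability {𝓗 : Type*} [NormedAddCommGroup 𝓗]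
    [InnerProductSpace ℂ 𝓗] [CompleteSpace 𝓗]
    (H : 𝓗 →L[ℂ] 𝓗) (hH : IsSelfAdjoint H) (σ Δt : ℝ)
    (V : 𝓗 →L[ℂ] 𝓗)
    (hV : V = NormedSpace.exp ((-(Complex.I * (Δt : ℂ))) • H) *
      NormedSpace.exp (((-(σ ^ 2 * Δt ^ 2 / 2) : ℝ) : ℂ) • (H * H))) :
    ∀ (N : ℕ) (ψ : 𝓗), ((‖(V ^ N) ψ‖ ^ 2 : ℝ) : ℂ) =
      inner ℂ ψ ((NormedSpace.exp (((-((N : ℝ) * σ ^ 2 * Δt ^ 2) : ℝ) : ℂ) • (H * H))) ψ) := by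
  intro N ψ
  letI : NormedAlgebra ℚ (𝓗 →L[ℂ] 𝓗) := .restrictScalars ℚ ℂ _
  set c : ℂ := ((-(σ ^ 2 * Δt ^ 2 / 2) : ℝ) : ℂ) with hc
  -- commuting facts
  have hHH : Commute H (H * H) := (Commute.refl H).mul_right (Commute.refl H)
  -- star V * V = exp ((2c) • (H*H))
  have hstarH : star H = H := hH
  have hstarV : star V = exp (c • (H * H)) * exp ((Complex.I * (Δt : ℂ)) • H) := by
    rw [hV, star_mul, star_exp, star_exp, star_smul, star_smul, hstarH, star_mul, hstarH]
    congr 2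
    · rw [Complex.star_def, Complex.conj_ofReal]
    · simp
  have key : star V * V = exp ((c + c) • (H * H)) := by
    rw [hstarV, hV]
    have h1 : exp ((Complex.I * (Δt : ℂ)) • H) * exp ((-(Complex.I * (Δt : ℂ))) • H)
        = 1 := by
      rw [← exp_add_of_commute (((Commute.refl H).smul_left _).smul_right _)]
      simp
    calc exp (c • (H * H)) * exp ((Complex.I * (Δt : ℂ)) • H) *
          (exp ((-(Complex.I * (Δt : ℂ))) • H) * exp (c • (H * H)))
        = exp (c • (H * H)) * (exp ((Complex.I * (Δt : ℂ)) • H) *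
          exp ((-(Complex.I * (Δt : ℂ))) • H)) * exp (c • (H * H)) := by simp [mul_assoc]
      _ = exp (c • (H * H)) * exp (c • (H * H)) := by rw [h1, mul_one]
      _ = exp ((c + c) • (H * H)) := by
          rw [add_smul, exp_add_of_commute (((Commute.refl _).smul_left _).smul_right _)]
  have hcomm : Commute (star V) V := by
    rw [hstarV, hV]
    have c1 : Commute ((Complex.I * (Δt : ℂ)) • H) ((-(Complex.I * (Δt : ℂ))) • H) :=
      ((Commute.refl H).smul_left _).smul_right _
    have c2 : Commute ((Complex.I * (Δt : ℂ)) • H) (c • (H * H)) :=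
      (hHH.smul_left _).smul_right _
    have c3 : Commute (c • (H * H)) ((-(Complex.I * (Δt : ℂ))) • H) :=
      (hHH.symm.smul_left _).smul_right _
    exact Commute.mul_left ((c3.exp).mul_right ((Commute.refl _).exp))
      ((c1.exp).mul_right ((c2.symm.exp).symm))
  have hpow : star (V ^ N) * V ^ N = exp ((N : ℂ) • (c + c) • (H * H)) := by
    rw [star_pow, ← hcomm.mul_pow, key, ← exp_nsmul, Nat.cast_smul_eq_nsmul ℂ]
  have hscal : (N : ℂ) • (c + c) • (H * H)
      = ((-((N : ℝ) * σ ^ 2 * Δt ^ 2) : ℝ) : ℂ) • (H * H) := by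
    rw [smul_smul]
    congr 1
    rw [hc]
    push_cast
    ring
  have := congrArg (fun A : 𝓗 →L[ℂ] 𝓗 => (inner ℂ ψ (A ψ) : ℂ)) hpow
  simp only [hscal] at this
  rw [← this, ContinuousLinearMap.mul_apply, ContinuousLinearMap.star_eq_adjoint,
    ContinuousLinearMap.adjoint_inner_right]
  rw [inner_self_eq_norm_sq_to_K]
  norm_cast
end

section
/- Let H be a bounded self-adjoint operator on a complex Hilbert space, σ ∈ ℝ, and t > 0. For each positive integer N set Δt := t/N and V_N := exp(−i Δt H) · exp(−(σ² Δt²/2) H²). Then ‖(V_N)^N − exp(−i t H)‖ ≤ (σ² t²/(2N)) · ‖H‖², where ‖·‖ is the operator norm. -/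
set_option maxHeartbeats 1000000

open NormedSpace

/-- Norm bound for `exp` of a nonpositive self-adjoint operator minus one. -/
lemma exp_nonpos_sub_one_norm_le {𝓗 : Type*} [NormedAddCommGroup 𝓗]
    [InnerProductSpace ℂ 𝓗] [CompleteSpace 𝓗] [Nontrivial 𝓗]
    (B : 𝓗 →L[ℂ] 𝓗) (hB : IsSelfAdjoint B) (hB0 : B ≤ 0) :
    ‖NormedSpace.exp B - 1‖ ≤ ‖B‖ := by
  have h1 : (1 : 𝓗 →L[ℂ] 𝓗) = cfc (fun _ : ℝ => (1:ℝ)) B := by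
    simp [cfc_const_one ℝ B]
  rw [← CFC.real_exp_eq_normedSpace_exp hB, h1, ← cfc_sub _ _ B (by fun_prop) (by fun_prop)]
  apply norm_cfc_le (norm_nonneg B)
  intro x hx
  have hx0 : x ≤ 0 := by
    have hnn : 0 ≤ -B := neg_nonneg.mpr hB0
    have hmem : -x ∈ spectrum ℝ (-B) := by
      rw [← spectrum.neg_eq]
      exact Set.neg_mem_neg.mpr hx
    have := spectrum_nonneg_of_nonneg hnn hmem
    linarith
  have hxn : -x ≤ ‖B‖ := by
    have := spectrum.norm_le_norm_of_mem hx
    rw [Real.norm_eq_abs] at this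
    linarith [abs_le.mp this]
  have hexp : Real.exp x ≤ 1 := Real.exp_le_one_iff.mpr hx0
  have hlow : x + 1 ≤ Real.exp x := Real.add_one_le_exp x
  rw [Real.norm_eq_abs, abs_sub_comm, abs_of_nonneg (by linarith)]
  linarith

/-- Quantitative fixed-`σ` continuum limit: with `Δt = t/N` and
`V_N = exp(−i Δt H) · exp(−(σ² Δt²/2) H²)`, one has
`‖(V_N)^N − exp(−i t H)‖ ≤ (σ² t²/(2N)) ‖H‖²`. -/
theorem regulated_step_continuum_bound {𝓗 : Type*} [NormedAddCommGroup 𝓗]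
    [InnerProductSpace ℂ 𝓗] [CompleteSpace 𝓗]
    (H : 𝓗 →L[ℂ] 𝓗) (hH : IsSelfAdjoint H) (σ t : ℝ) (ht : 0 < t)
    (N : ℕ) (hN : 0 < N) (Δt : ℝ) (hΔt : Δt = t / (N : ℝ)) :
    ‖(NormedSpace.exp ((-(Complex.I * (Δt : ℂ))) • H) *
        NormedSpace.exp (((-(σ ^ 2 * Δt ^ 2 / 2) : ℝ) : ℂ) • (H * H))) ^ N -
      NormedSpace.exp ((-(Complex.I * (t : ℂ))) • H)‖ ≤
      σ ^ 2 * t ^ 2 / (2 * (N : ℝ)) * ‖H‖ ^ 2 := by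
  rcases subsingleton_or_nontrivial 𝓗 with h𝓗 | h𝓗
  · have : Subsingleton (𝓗 →L[ℂ] 𝓗) := ⟨fun f g => by ext x; exact Subsingleton.elim _ _⟩
    rw [Subsingleton.elim ((NormedSpace.exp ((-(Complex.I * (Δt : ℂ))) • H) *
        NormedSpace.exp (((-(σ ^ 2 * Δt ^ 2 / 2) : ℝ) : ℂ) • (H * H))) ^ N -
      NormedSpace.exp ((-(Complex.I * (t : ℂ))) • H)) 0, norm_zero]
    positivity
  -- setup
  have hΔt0 : 0 < Δt := by
    rw [hΔt]; positivity
  have hNΔt : (N : ℝ) * Δt = t := by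
    have hN0 : (N:ℝ) ≠ 0 := by exact_mod_cast hN.ne'
    rw [hΔt]; field_simp
  have hcomm : Commute ((-(Complex.I * (Δt : ℂ))) • H)
      ((((-(σ ^ 2 * Δt ^ 2 / 2) : ℝ)) : ℂ) • (H * H)) :=
    (((Commute.refl H).mul_right (Commute.refl H)).smul_left _).smul_right _
  let +nondep : NormedAlgebra ℚ (𝓗 →L[ℂ] 𝓗) := .restrictScalars ℚ ℂ _
  -- combine the power
  have hpow : (NormedSpace.exp ((-(Complex.I * (Δt : ℂ))) • H) *
        NormedSpace.exp (((-(σ ^ 2 * Δt ^ 2 / 2) : ℝ) : ℂ) • (H * H))) ^ N =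
      NormedSpace.exp ((-(Complex.I * (t : ℂ))) • H) *
        NormedSpace.exp (((-(σ ^ 2 * t * Δt / 2) : ℝ) : ℂ) • (H * H)) := by
    rw [(hcomm.exp).mul_pow, ← exp_nsmul, ← exp_nsmul, ← Nat.cast_smul_eq_nsmul ℂ, ← Nat.cast_smul_eq_nsmul ℂ, smul_smul, smul_smul]
    congr 2
    · rw [← hNΔt]
      push_cast
      ring_nf
    · rw [← hNΔt]
      push_cast
      ring_nf
  rw [hpow]
  -- pull out the unitary
  set U := NormedSpace.exp ((-(Complex.I * (t : ℂ))) • H) with hU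
  have hskew : (-(Complex.I * (t : ℂ))) • H ∈ skewAdjoint (𝓗 →L[ℂ] 𝓗) := by
    rw [skewAdjoint.mem_iff, star_smul, hH.star_eq, ← neg_smul]
    congr 1
    simp [Complex.ext_iff]
  have hUu : U ∈ unitary (𝓗 →L[ℂ] 𝓗) :=
    exp_mem_unitary_of_mem_skewAdjoint hskew
  have key : U * NormedSpace.exp (((-(σ ^ 2 * t * Δt / 2) : ℝ) : ℂ) • (H * H)) - U =
      U * (NormedSpace.exp (((-(σ ^ 2 * t * Δt / 2) : ℝ) : ℂ) • (H * H)) - 1) := by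
    rw [mul_sub, mul_one]
  rw [key, CStarRing.norm_coe_unitary_mul ⟨U, hUu⟩]
  -- bound the remainder
  set c : ℝ := -(σ ^ 2 * t * Δt / 2) with hc
  have hc0 : c ≤ 0 := by
    rw [hc, neg_nonpos]; positivity
  set B : 𝓗 →L[ℂ] 𝓗 := ((c : ℂ)) • (H * H) with hB
  have hBr : B = c • (H * H) := rfl
  have hHH : IsSelfAdjoint (H * H) := by
    rw [IsSelfAdjoint, star_mul, hH.star_eq]
  have hBsa : IsSelfAdjoint B := by
    rw [hBr]
    exact IsSelfAdjoint.smul (star_trivial c) hHH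
  have hHH0 : (0 : 𝓗 →L[ℂ] 𝓗) ≤ H * H := by
    have := star_mul_self_nonneg H
    rwa [hH.star_eq] at this
  have hB0 : B ≤ 0 := by
    rw [← neg_nonneg, hBr, ← neg_smul]
    set r : ℝ := Real.sqrt (-c) with hr
    have hrr : r * r = -c := Real.mul_self_sqrt (by linarith)
    have h0 : (0 : 𝓗 →L[ℂ] 𝓗) ≤ star (r • H) * (r • H) := star_mul_self_nonneg _
    rwa [star_smul, star_trivial, hH.star_eq, smul_mul_smul_comm, hrr] at h0
  have hexpeq : NormedSpace.exp B = NormedSpace.exp B := by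
    rfl
  have hnorm : ‖NormedSpace.exp B - 1‖ ≤ ‖B‖ := by
    rw [hexpeq]
    exact exp_nonpos_sub_one_norm_le B hBsa hB0
  refine hnorm.trans ?_
  have hBn : ‖B‖ ≤ |c| * (‖H‖ * ‖H‖) := by
    rw [hBr]
    calc ‖c • (H * H)‖ = |c| * ‖H * H‖ := by rw [norm_smul, Real.norm_eq_abs]
    _ ≤ |c| * (‖H‖ * ‖H‖) := by
        gcongr
        exact norm_mul_le H H
  refine hBn.trans ?_
  have habs : |c| = σ ^ 2 * t * Δt / 2 := by
    rw [hc, abs_neg, abs_of_nonneg (by positivity)]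
  rw [habs, hΔt]
  have hNpos : (0:ℝ) < N := by exact_mod_cast hN
  exact le_of_eq (by field_simp)
end

section
/- Let H be a bounded self-adjoint operator on a complex Hilbert space, σ ∈ ℝ, and t > 0. For each positive integer N set Δt := t/N and V_N := exp(−i Δt H) · exp(−(σ² Δt²/2) H²). Then (V_N)^N converges in operator norm to exp(−i t H) as N → ∞. -/
open NormedSpace Filter

/-- Fixed-`σ` continuum limit: with `Δt = t/N` and
`V_N = exp(−i Δt H) · exp(−(σ² Δt²/2) H²)`, the powers `(V_N)^N` converge in operator
norm to `exp(−i t H)` as `N → ∞`. -/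
theorem regulated_step_continuum_limit {𝓗 : Type*} [NormedAddCommGroup 𝓗]
    [InnerProductSpace ℂ 𝓗] [CompleteSpace 𝓗]
    (H : 𝓗 →L[ℂ] 𝓗) (hH : IsSelfAdjoint H) (σ t : ℝ) (ht : 0 < t) :
    Filter.Tendsto
      (fun N : ℕ =>
        (exp ((-(Complex.I * ((t / (N : ℝ)) : ℂ))) • H) *
          exp (((-(σ ^ 2 * (t / (N : ℝ)) ^ 2 / 2) : ℝ) : ℂ) • (H * H))) ^ N)
      Filter.atTop (nhds (exp ((-(Complex.I * (t : ℂ))) • H))) := by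
  letI : NormedAlgebra ℚ (𝓗 →L[ℂ] 𝓗) := NormedAlgebra.restrictScalars ℚ ℂ _
  set c : ℂ := ((-(σ ^ 2 * t ^ 2 / 2) : ℝ) : ℂ) with hc
  have hg : Tendsto (fun N : ℕ => exp ((-(Complex.I * (t : ℂ))) • H + (c / N) • (H * H)))
      atTop (nhds (exp ((-(Complex.I * (t : ℂ))) • H))) := by
    have h1 : Tendsto (fun N : ℕ => (c / N : ℂ)) atTop (nhds 0) := by
      simpa using (tendsto_inv_atTop_nhds_zero_nat (𝕜 := ℂ)).const_mul c |>.congr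
        (fun N => by rw [div_eq_mul_inv])
    have h2 : Tendsto (fun N : ℕ => (-(Complex.I * (t : ℂ))) • H + (c / N) • (H * H))
        atTop (nhds ((-(Complex.I * (t : ℂ))) • H + (0 : ℂ) • (H * H))) :=
      tendsto_const_nhds.add (h1.smul_const (H * H))
    simpa [Function.comp_def] using (NormedSpace.exp_continuous.tendsto _).comp h2
  refine hg.congr' ?_
  filter_upwards [eventually_gt_atTop 0] with N hN
  have hN' : (N : ℂ) ≠ 0 := Nat.cast_ne_zero.mpr hN.ne'
  have hcomm : Commute ((-(Complex.I * ((t / (N : ℝ)) : ℂ))) • H)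
      ((((-(σ ^ 2 * (t / (N : ℝ)) ^ 2 / 2) : ℝ) : ℂ)) • (H * H)) :=
    (((Commute.refl H).mul_right (Commute.refl H)).smul_left _).smul_right _
  rw [← exp_add_of_commute hcomm, ← exp_nsmul]
  congr 1
  rw [smul_add, ← Nat.cast_smul_eq_nsmul ℂ, ← Nat.cast_smul_eq_nsmul ℂ, smul_smul, smul_smul]
  congr 1
  · congr 1; push_cast; field_simp
  · congr 1; push_cast [hc]; field_simp
end

section
/- Let H be a bounded self-adjoint operator on a complex Hilbert space, let P be an orthogonal projection (P² = P, P† = P) commuting with H (HP = PH), and suppose that for some real E ≥ 0 the spectral lower bound E² ‖P ψ‖² ≤ ⟨P ψ, H² (P ψ)⟩ holds for every vector ψ. Then for all σ, Δt ∈ ℝ and every vector ψ, ‖ exp(−i Δt H) · exp(−(σ² Δt²/2) H²) (P ψ) ‖ ≤ exp(−σ² Δt² E²/2) · ‖ψ‖. -/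
open NormedSpace ContinuousLinearMap

theorem exp_unitary_isometry {𝓗 : Type*} [NormedAddCommGroup 𝓗] [InnerProductSpace ℂ 𝓗] [CompleteSpace 𝓗]
    (H : 𝓗 →L[ℂ] 𝓗) (hH : IsSelfAdjoint H) (Δt : ℝ) (x : 𝓗) :
    ‖exp ((-(Complex.I * (Δt : ℂ))) • H) x‖ = ‖x‖ := by
  set U := exp ((-(Complex.I * (Δt : ℂ))) • H) with hU
  have hstar : star U * U = 1 := by
    rw [hU, star_exp]
    have h1 : star ((-(Complex.I * (Δt : ℂ))) • H) = (Complex.I * (Δt : ℂ)) • H := by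
      rw [star_smul, hH.star_eq]
      congr 1
      simp [Complex.ext_iff]
    rw [h1]
    have : (-(Complex.I * (Δt : ℂ))) • H = -((Complex.I * (Δt : ℂ)) • H) := by
      rw [neg_smul]
    letI hQ : NormedAlgebra ℚ (𝓗 →L[ℂ] 𝓗) := NormedAlgebra.restrictScalars ℚ ℂ (𝓗 →L[ℂ] 𝓗)
    rw [this, ← exp_add_of_commute ((Commute.refl _).neg_right), add_neg_cancel, exp_zero]
  have key : (inner ℂ (U x) (U x) : ℂ) = inner ℂ x x := by
    rw [← ContinuousLinearMap.adjoint_inner_right, ← ContinuousLinearMap.star_eq_adjoint]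
    have : star U (U x) = (star U * U) x := rfl
    rw [this, hstar, ContinuousLinearMap.one_apply]
  have h2 : ‖U x‖ ^ 2 = ‖x‖ ^ 2 := by
    rw [← inner_self_eq_norm_sq (𝕜 := ℂ), ← inner_self_eq_norm_sq (𝕜 := ℂ), key]
  have := congrArg Real.sqrt h2
  rwa [Real.sqrt_sq (norm_nonneg _), Real.sqrt_sq (norm_nonneg _)] at this


theorem gauss_contract {𝓗 : Type*} [NormedAddCommGroup 𝓗] [InnerProductSpace ℂ 𝓗]
    [CompleteSpace 𝓗]
    (A P : 𝓗 →L[ℂ] 𝓗)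
    (hProj : P * P = P)
    (hAP : A * P = P * A)
    (E : ℝ) (hE : 0 ≤ E)
    (hLow : ∀ ψ : 𝓗, E ^ 2 * ‖P ψ‖ ^ 2 ≤ (inner ℂ (P ψ) (A (P ψ)) : ℂ).re)
    (c : ℝ) (hc : 0 ≤ c) (v : 𝓗) :
    ‖exp ((-c) • A) (P v)‖ ≤ Real.exp (-(c * E ^ 2)) * ‖P v‖ := by
  letI : InnerProductSpace ℝ 𝓗 := InnerProductSpace.complexToReal
  set f : ℝ → 𝓗 := fun t => exp ((-t) • A) (P v) with hfdef
  have hPf : ∀ t, P (f t) = f t := by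
    intro t
    have hcomm : Commute A P := hAP
    have hcomm' : P * exp ((-t) • A) = exp ((-t) • A) * P :=
      ((hcomm.smul_left (-t)).exp_left).symm
    calc P (f t) = (P * exp ((-t) • A)) (P v) := rfl
    _ = (exp ((-t) • A) * P) (P v) := by rw [hcomm']
    _ = exp ((-t) • A) ((P * P) v) := rfl
    _ = f t := by rw [hProj]
  have hAf : ∀ t, exp ((-t) • A) (A (P v)) = A (f t) := by
    intro t
    have hcomm : Commute ((-t) • A) A := (Commute.refl A).smul_left _
    have h : exp ((-t) • A) * A = A * exp ((-t) • A) := hcomm.exp_left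
    calc exp ((-t) • A) (A (P v)) = (exp ((-t) • A) * A) (P v) := rfl
    _ = (A * exp ((-t) • A)) (P v) := by rw [h]
    _ = A (f t) := rfl
  have hf' : ∀ t : ℝ, HasDerivAt f (-(A (f t))) t := by
    intro t
    have h1 : HasDerivAt (fun u : ℝ => exp (u • A)) (exp ((-t) • A) * A) (-t) :=
      hasDerivAt_exp_smul_const A (-t)
    have h2 : HasDerivAt (fun u : ℝ => -u) (-1 : ℝ) t := (hasDerivAt_id t).neg
    have h3 : HasDerivAt (fun u : ℝ => exp ((-u) • A)) ((-1 : ℝ) • (exp ((-t) • A) * A)) t :=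
      h1.scomp t h2
    have h4 := (((ContinuousLinearMap.apply ℂ 𝓗 (P v)).restrictScalars
        ℝ).hasFDerivAt.comp_hasDerivAt t h3)
    have h5 : (((ContinuousLinearMap.apply ℂ 𝓗 (P v)).restrictScalars ℝ))
        ((-1 : ℝ) • (exp ((-t) • A) * A)) = -(A (f t)) := by
      show ((-1 : ℝ) • (exp ((-t) • A) * A)) (P v) = -(A (f t))
      rw [ContinuousLinearMap.smul_apply, ContinuousLinearMap.mul_apply, hAf t, neg_one_smul]
    rw [h5] at h4
    exact h4
  have hg : ∀ t : ℝ, HasDerivAt (fun t => ‖f t‖ ^ 2)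
      (2 * (@inner ℝ 𝓗 _ (f t) (-(A (f t))))) t := by
    intro t
    have h5 := HasDerivAt.inner (𝕜 := ℝ) (hf' t) (hf' t)
    have heq : (fun t => @inner ℝ 𝓗 _ (f t) (f t)) = fun t => ‖f t‖ ^ 2 := by
      funext s; exact real_inner_self_eq_norm_sq _
    rw [heq] at h5
    refine h5.congr_deriv ?_
    rw [real_inner_comm (-(A (f t))) (f t)]
    ring
  have hbound : ∀ t : ℝ, 2 * (@inner ℝ 𝓗 _ (f t) (-(A (f t))))
      ≤ -(2 * E ^ 2) * ‖f t‖ ^ 2 := by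
    intro t
    have h6 := hLow (f t)
    rw [hPf t] at h6
    have h7 : (@inner ℝ 𝓗 _ (f t) (-(A (f t))))
        = -(inner ℂ (f t) (A (f t)) : ℂ).re := by
      rw [inner_neg_right]; rfl
    rw [h7]
    nlinarith [h6]
  -- h t := exp (2E²t) * ‖f t‖²  is antitone
  set h : ℝ → ℝ := fun t => Real.exp (2 * E ^ 2 * t) * ‖f t‖ ^ 2 with hhdef
  have hh' : ∀ t : ℝ, HasDerivAt h
      (2 * E ^ 2 * Real.exp (2 * E ^ 2 * t) * ‖f t‖ ^ 2
        + Real.exp (2 * E ^ 2 * t) * (2 * (@inner ℝ 𝓗 _ (f t) (-(A (f t)))))) t := by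
    intro t
    have e1 : HasDerivAt (fun t : ℝ => Real.exp (2 * E ^ 2 * t))
        (Real.exp (2 * E ^ 2 * t) * (2 * E ^ 2)) t := by
      have d1 : HasDerivAt (fun t : ℝ => 2 * E ^ 2 * t) (2 * E ^ 2) t := by
        simpa using (hasDerivAt_id t).const_mul (2 * E ^ 2)
      exact d1.exp
    have e2 := e1.mul (hg t)
    refine e2.congr_deriv ?_
    ring
  have hanti : Antitone h := by
    apply antitone_of_deriv_nonpos
    · intro t; exact (hh' t).differentiableAt
    · intro t
      rw [(hh' t).deriv]
      nlinarith [hbound t, Real.exp_pos (2 * E ^ 2 * t), sq_nonneg ‖f t‖,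
        (Real.exp_pos (2 * E ^ 2 * t)).le]
  have hmono := hanti hc
  have h0 : h 0 = ‖P v‖ ^ 2 := by
    simp [hhdef, hfdef, exp_zero]
  rw [h0] at hmono
  have hfc : ‖f c‖ ^ 2 ≤ (Real.exp (-(c * E ^ 2)) * ‖P v‖) ^ 2 := by
    have hexp : (0:ℝ) < Real.exp (2 * E ^ 2 * c) := Real.exp_pos _
    have key : (Real.exp (-(c * E ^ 2)) * ‖P v‖) ^ 2
        = (Real.exp (2 * E ^ 2 * c))⁻¹ * ‖P v‖ ^ 2 := by
      rw [mul_pow, ← Real.exp_nat_mul, ← Real.exp_neg]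
      ring_nf
    rw [key]
    calc ‖f c‖ ^ 2 = (Real.exp (2 * E ^ 2 * c))⁻¹ * (Real.exp (2 * E ^ 2 * c) * ‖f c‖ ^ 2) := by
          field_simp
    _ ≤ (Real.exp (2 * E ^ 2 * c))⁻¹ * ‖P v‖ ^ 2 :=
          mul_le_mul_of_nonneg_left hmono (by positivity)
  have := Real.sqrt_le_sqrt hfc
  rwa [Real.sqrt_sq (norm_nonneg _), Real.sqrt_sq (by positivity)] at this



/-- High/negative energy suppression: if `P` is an orthogonal
projection commuting with the bounded self-adjoint operator `H`, and on its range the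
spectral lower bound `E² ‖P ψ‖² ≤ ⟨P ψ, H² (P ψ)⟩` holds for some `E ≥ 0`, then the
regulated step contracts the range of `P` by the Gaussian factor:
`‖exp(−i Δt H) exp(−(σ² Δt²/2) H²) (P ψ)‖ ≤ e^{−σ² Δt² E²/2} ‖ψ‖`. -/
theorem regulated_step_spectral_suppression {𝓗 : Type*} [NormedAddCommGroup 𝓗]
    [InnerProductSpace ℂ 𝓗] [CompleteSpace 𝓗]
    (H P : 𝓗 →L[ℂ] 𝓗) (hH : IsSelfAdjoint H)
    (hProj : P * P = P) (hPsa : ContinuousLinearMap.adjoint P = P)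
    (hComm : H * P = P * H)
    (E : ℝ) (hE : 0 ≤ E)
    (hLow : ∀ ψ : 𝓗, E ^ 2 * ‖P ψ‖ ^ 2 ≤ (inner ℂ (P ψ) ((H * H) (P ψ)) : ℂ).re) :
    ∀ (σ Δt : ℝ) (ψ : 𝓗),
      ‖(exp ((-(Complex.I * (Δt : ℂ))) • H) *
          exp (((-(σ ^ 2 * Δt ^ 2 / 2) : ℝ) : ℂ) • (H * H))) (P ψ)‖ ≤
        Real.exp (-(σ ^ 2 * Δt ^ 2 * E ^ 2 / 2)) * ‖ψ‖ := by
  intro σ Δt ψ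
  set c : ℝ := σ ^ 2 * Δt ^ 2 / 2 with hcdef
  have hc : 0 ≤ c := by positivity
  -- P is a contraction
  have hPcontr : ‖P ψ‖ ≤ ‖ψ‖ := by
    by_cases h0 : ‖P ψ‖ = 0
    · rw [h0]; exact norm_nonneg _
    · have h1 : (inner ℂ (P ψ) (P ψ) : ℂ) = inner ℂ ψ (P ψ) := by
        calc (inner ℂ (P ψ) (P ψ) : ℂ)
            = inner ℂ ψ (ContinuousLinearMap.adjoint P (P ψ)) := by
              rw [ContinuousLinearMap.adjoint_inner_right]
        _ = inner ℂ ψ ((P * P) ψ) := by rw [hPsa]; rfl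
        _ = inner ℂ ψ (P ψ) := by rw [hProj]
      have h2 : ‖P ψ‖ ^ 2 = ‖(inner ℂ ψ (P ψ) : ℂ)‖ := by
        rw [← h1, inner_self_eq_norm_sq_to_K]
        simp
      have h3 : ‖(inner ℂ ψ (P ψ) : ℂ)‖ ≤ ‖ψ‖ * ‖P ψ‖ := norm_inner_le_norm _ _
      have h4 : ‖P ψ‖ * ‖P ψ‖ ≤ ‖ψ‖ * ‖P ψ‖ := by
        rw [← sq]; rw [h2]; exact h3
      exact le_of_mul_le_mul_right h4 (lt_of_le_of_ne (norm_nonneg _) (Ne.symm h0))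
  -- rewrite the application of the product and the Gaussian factor as exp ℝ
  have hexpR : exp (((-c : ℝ) : ℂ) • (H * H)) = exp ((-c) • (H * H)) := by
    rw [Complex.coe_smul]
  have happ : (exp ((-(Complex.I * (Δt : ℂ))) • H) *
      exp (((-(σ ^ 2 * Δt ^ 2 / 2) : ℝ) : ℂ) • (H * H))) (P ψ)
      = exp ((-(Complex.I * (Δt : ℂ))) • H)
        (exp ((-c) • (H * H)) (P ψ)) := by
    rw [ContinuousLinearMap.mul_apply, ← hexpR, hcdef]
  rw [happ, exp_unitary_isometry H hH]
  -- commutation of H*H with P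
  have hAP : (H * H) * P = P * (H * H) := by
    calc H * H * P = H * (H * P) := by rw [mul_assoc]
    _ = H * (P * H) := by rw [hComm]
    _ = (H * P) * H := by rw [mul_assoc]
    _ = P * H * H := by rw [hComm]
    _ = P * (H * H) := by rw [mul_assoc]
  have hmain := gauss_contract (H * H) P hProj hAP E hE hLow c hc ψ
  have hexp_eq : Real.exp (-(c * E ^ 2)) = Real.exp (-(σ ^ 2 * Δt ^ 2 * E ^ 2 / 2)) := by
    rw [hcdef]; ring_nf
  calc ‖exp ((-c) • (H * H)) (P ψ)‖ ≤ Real.exp (-(c * E ^ 2)) * ‖P ψ‖ := hmain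
  _ ≤ Real.exp (-(c * E ^ 2)) * ‖ψ‖ :=
      mul_le_mul_of_nonneg_left hPcontr (Real.exp_pos _).le
  _ = Real.exp (-(σ ^ 2 * Δt ^ 2 * E ^ 2 / 2)) * ‖ψ‖ := by rw [hexp_eq]
end
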